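/- The following hold: (i) max(√(ξ·s_n²/n) − M·ξ/n, 0) ≤ max_{w ∈ K} Σᵢ wᵢ·zᵢ − z̄ ≤ √(ξ·s_n²/n); and (ii) if in addition s_n² ≥ ξ·M²/n, then max_{w ∈ K} Σᵢ wᵢ·zᵢ = z̄ + √(ξ·s_n²/n). -/

import Mathlib

open Finset

noncomputable section

set_option maxHeartbeats 1000000

/-- variance representation of the upper confidence bound over the
χ²-divergence ball `K` around the uniform distribution. -/
theorem stmt_14 (n : ℕ) (hn : 1 ≤ n) (M ξ : ℝ) (hM : 0 < M) (hξ : 0 ≤ ξ)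
    (z : Fin n → ℝ) (hz : ∀ i, z i ∈ Set.Icc (0 : ℝ) M) :
    let zbar : ℝ := (1 / (n : ℝ)) * ∑ i, z i
    let s2 : ℝ := (1 / (n : ℝ)) * ∑ i, (z i) ^ 2 - zbar ^ 2
    let K : Set (Fin n → ℝ) := {w | (∀ i, 0 ≤ w i) ∧ ∑ i, w i = 1 ∧
      (1 / (n : ℝ)) * ∑ i, ((n : ℝ) * w i - 1) ^ 2 ≤ ξ / n}
    let m : ℝ := sSup {x : ℝ | ∃ w ∈ K, x = ∑ i, w i * z i}
    (max (Real.sqrt (ξ * s2 / n) - M * ξ / n) 0 ≤ m - zbar ∧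
      m - zbar ≤ Real.sqrt (ξ * s2 / n)) ∧
    (ξ * M ^ 2 / n ≤ s2 → m = zbar + Real.sqrt (ξ * s2 / n)) := by
  intro zbar s2 K m
  have hN : (0:ℝ) < (n:ℝ) := by exact_mod_cast hn
  have hNne : (n:ℝ) ≠ 0 := ne_of_gt hN
  have hzsum : ∑ i, z i = (n:ℝ) * zbar := by
    simp only [zbar]; field_simp
  have hsq : ∑ i, (z i)^2 = (n:ℝ) * s2 + (n:ℝ) * zbar^2 := by
    simp only [s2]; field_simp; ring
  have hvar : ∑ i, (z i - zbar)^2 = (n:ℝ) * s2 := by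
    have : ∑ i, (z i - zbar)^2
        = ∑ i, (z i)^2 - 2 * zbar * ∑ i, z i + (n:ℝ) * zbar^2 := by
      simp only [sub_sq, Finset.sum_add_distrib, Finset.sum_sub_distrib,
        Finset.sum_const, Finset.card_univ, Fintype.card_fin, nsmul_eq_mul]
      rw [show ∑ x, 2 * z x * zbar = 2 * zbar * ∑ i, z i by
        rw [Finset.mul_sum]; exact Finset.sum_congr rfl fun i _ => by ring]
    rw [this, hzsum, hsq]; ring
  have hs2 : 0 ≤ s2 := by
    have h0 : 0 ≤ ∑ i, (z i - zbar)^2 :=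
      Finset.sum_nonneg fun i _ => sq_nonneg _
    nlinarith [hvar]
  -- the value for w in K, key identity
  have hkey : ∀ w : Fin n → ℝ, ∑ i, w i = 1 →
      ∑ i, (w i - 1/(n:ℝ)) * (z i - zbar) = ∑ i, w i * z i - zbar := by
    intro w hw
    have : ∑ i, (w i - 1/(n:ℝ)) * (z i - zbar)
        = ∑ i, w i * z i - zbar * ∑ i, w i - (1/(n:ℝ)) * ∑ i, z i
          + (n:ℝ) * ((1/(n:ℝ)) * zbar) := by
      simp only [sub_mul, mul_sub, Finset.sum_sub_distrib]
      rw [← Finset.mul_sum, ← Finset.sum_mul, ← Finset.mul_sum]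
      simp only [Finset.sum_const, Finset.card_univ, Fintype.card_fin, nsmul_eq_mul]
      ring
    rw [this, hw, hzsum]
    field_simp; ring
  -- upper bound
  have hub : ∀ w ∈ K, ∑ i, w i * z i ≤ zbar + Real.sqrt (ξ * s2 / n) := by
    intro w hw
    obtain ⟨hw0, hw1, hw2⟩ := hw
    have ha : ∑ i, (w i - 1/(n:ℝ))^2 ≤ ξ / (n:ℝ)^2 := by
      have heq : ∀ i : Fin n, (w i - 1/(n:ℝ))^2 = ((n:ℝ) * w i - 1)^2 / (n:ℝ)^2 := by
        intro i; field_simp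
      rw [Finset.sum_congr rfl (fun i _ => heq i), ← Finset.sum_div]
      have hle : ∑ i, ((n:ℝ) * w i - 1)^2 ≤ ξ := by
        have h2 := mul_le_mul_of_nonneg_left hw2 hN.le
        calc ∑ i, ((n:ℝ) * w i - 1)^2
            = (n:ℝ) * ((1/(n:ℝ)) * ∑ i, ((n:ℝ) * w i - 1)^2) := by field_simp
          _ ≤ (n:ℝ) * (ξ / (n:ℝ)) := h2
          _ = ξ := by field_simp
      gcongr
    have hcs : (∑ i, (w i - 1/(n:ℝ)) * (z i - zbar))^2
        ≤ (∑ i, (w i - 1/(n:ℝ))^2) * ∑ i, (z i - zbar)^2 :=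
      Finset.sum_mul_sq_le_sq_mul_sq _ _ _
    have hB : (∑ i, (w i - 1/(n:ℝ)) * (z i - zbar))^2 ≤ ξ * s2 / n := by
      calc (∑ i, (w i - 1/(n:ℝ)) * (z i - zbar))^2
          ≤ (∑ i, (w i - 1/(n:ℝ))^2) * ∑ i, (z i - zbar)^2 := hcs
        _ ≤ (ξ / (n:ℝ)^2) * ((n:ℝ) * s2) := by
            apply mul_le_mul ha (le_of_eq hvar) (by rw [hvar]; positivity) (by positivity)
        _ = ξ * s2 / n := by field_simp
    have : ∑ i, (w i - 1/(n:ℝ)) * (z i - zbar) ≤ Real.sqrt (ξ * s2 / n) := by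
      calc ∑ i, (w i - 1/(n:ℝ)) * (z i - zbar)
          ≤ |∑ i, (w i - 1/(n:ℝ)) * (z i - zbar)| := le_abs_self _
        _ = Real.sqrt ((∑ i, (w i - 1/(n:ℝ)) * (z i - zbar))^2) := (Real.sqrt_sq_eq_abs _).symm
        _ ≤ Real.sqrt (ξ * s2 / n) := Real.sqrt_le_sqrt hB
    rw [hkey w hw1] at this
    linarith
  -- uniform weight is in K
  have huniK : (fun _ : Fin n => 1/(n:ℝ)) ∈ K := by
    refine ⟨fun i => by positivity, ?_, ?_⟩
    · simp [Finset.sum_const, Finset.card_univ, Fintype.card_fin]; field_simp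
    · have h0 : ((n:ℝ) * (1/(n:ℝ)) - 1)^2 = 0 := by field_simp; norm_num
      simp only [h0, Finset.sum_const, Finset.card_univ, Fintype.card_fin,
        nsmul_eq_mul, mul_zero]
      exact div_nonneg hξ hN.le
  have huniVal : ∑ i, (1/(n:ℝ)) * z i = zbar := by
    rw [← Finset.mul_sum]
  have hne : Set.Nonempty {x : ℝ | ∃ w ∈ K, x = ∑ i, w i * z i} :=
    ⟨zbar, (fun _ => 1/(n:ℝ)), huniK, huniVal.symm⟩
  have hbdd : BddAbove {x : ℝ | ∃ w ∈ K, x = ∑ i, w i * z i} := by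
    refine ⟨zbar + Real.sqrt (ξ * s2 / n), ?_⟩
    rintro x ⟨w, hw, rfl⟩
    exact hub w hw
  have hmub : m - zbar ≤ Real.sqrt (ξ * s2 / n) := by
    have : m ≤ zbar + Real.sqrt (ξ * s2 / n) := by
      apply csSup_le hne
      rintro x ⟨w, hw, rfl⟩; exact hub w hw
    linarith
  have hm0 : zbar ≤ m := le_csSup hbdd ⟨(fun _ => 1/(n:ℝ)), huniK, huniVal.symm⟩
  -- part (ii): witness
  have hwit : ξ * M ^ 2 / n ≤ s2 → zbar + Real.sqrt (ξ * s2 / n) ≤ m := by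
    intro hcond
    by_cases hs0 : s2 = 0
    · have hξ0 : ξ = 0 := by
        rw [hs0] at hcond
        by_contra hne'
        have hξpos : 0 < ξ := lt_of_le_of_ne hξ (Ne.symm hne')
        have h1 : 0 < ξ * M ^ 2 / n := div_pos (mul_pos hξpos (pow_pos hM 2)) hN
        linarith
      rw [hξ0, zero_mul, zero_div, Real.sqrt_zero, add_zero]; exact hm0
    · have hs2' : 0 < s2 := lt_of_le_of_ne hs2 (Ne.symm hs0)
      set t : ℝ := Real.sqrt (ξ / ((n:ℝ) * s2)) / n with ht
      have ht0 : 0 ≤ t := by positivity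
      have ht2 : t^2 = ξ / ((n:ℝ)^3 * s2) := by
        rw [ht, div_pow, Real.sq_sqrt (div_nonneg hξ (mul_pos hN hs2').le), div_div]
        congr 1; ring
      have htM : t * M ≤ 1 / n := by
        rw [ht, div_mul_eq_mul_div, div_le_div_iff₀ hN hN]
        have h1 : Real.sqrt (ξ / ((n:ℝ) * s2)) * M ≤ 1 := by
          rw [← Real.sqrt_sq hM.le, ← Real.sqrt_mul (by positivity)]
          rw [show (1:ℝ) = Real.sqrt 1 by simp]
          apply Real.sqrt_le_sqrt
          rw [div_mul_eq_mul_div, div_le_one (by positivity)]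
          calc ξ * M^2 = (ξ * M^2 / n) * n := by field_simp
            _ ≤ s2 * n := by apply mul_le_mul_of_nonneg_right hcond hN.le
            _ = n * s2 := by ring
        nlinarith
      set w : Fin n → ℝ := fun i => 1/(n:ℝ) + t * (z i - zbar) with hwdef
      have hzbar_le : zbar ≤ M := by
        have : ∑ i, z i ≤ ∑ _i : Fin n, M :=
          Finset.sum_le_sum fun i _ => (hz i).2
        simp only [Finset.sum_const, Finset.card_univ, Fintype.card_fin, nsmul_eq_mul] at this
        simp only [zbar]
        rw [div_mul_eq_mul_div, one_mul, div_le_iff₀ hN]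
        linarith
      have hzbar0 : 0 ≤ zbar := by
        simp only [zbar]
        have : (0:ℝ) ≤ ∑ i, z i := Finset.sum_nonneg fun i _ => (hz i).1
        positivity
      have hwK : w ∈ K := by
        refine ⟨?_, ?_, ?_⟩
        · intro i
          have : t * (zbar - z i) ≤ t * M := by
            apply mul_le_mul_of_nonneg_left _ ht0
            have := (hz i).1; linarith
          simp only [hwdef]
          nlinarith [htM]
        · simp only [hwdef, Finset.sum_add_distrib, Finset.sum_const, Finset.card_univ,
            Fintype.card_fin, nsmul_eq_mul, ← Finset.mul_sum, Finset.sum_sub_distrib]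
          rw [hzsum]
          field_simp; ring
        · have heq : ∀ i : Fin n, ((n:ℝ) * w i - 1)^2 = (n:ℝ)^2 * t^2 * (z i - zbar)^2 := by
            intro i; simp only [hwdef]; field_simp; ring
          rw [Finset.sum_congr rfl fun i _ => heq i, ← Finset.mul_sum, hvar, ht2]
          exact le_of_eq (by field_simp)
      have hwval : ∑ i, w i * z i = zbar + Real.sqrt (ξ * s2 / n) := by
        have h1 : ∑ i, (w i - 1/(n:ℝ)) * (z i - zbar) = ∑ i, w i * z i - zbar := by
          apply hkey
          simp only [hwdef, Finset.sum_add_distrib, Finset.sum_const, Finset.card_univ,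
            Fintype.card_fin, nsmul_eq_mul, ← Finset.mul_sum, Finset.sum_sub_distrib]
          rw [hzsum]; field_simp; ring
        have h2 : ∀ i : Fin n, (w i - 1/(n:ℝ)) * (z i - zbar) = t * (z i - zbar)^2 := by
          intro i; simp only [hwdef]; ring
        rw [Finset.sum_congr rfl fun i _ => h2 i, ← Finset.mul_sum, hvar] at h1
        have h3 : t * ((n:ℝ) * s2) = Real.sqrt (ξ * s2 / n) := by
          rw [ht]
          rw [show Real.sqrt (ξ / ((n:ℝ) * s2)) / n * ((n:ℝ) * s2)
            = Real.sqrt (ξ / ((n:ℝ) * s2)) * s2 by field_simp]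
          rw [← Real.sqrt_sq hs2'.le, ← Real.sqrt_mul (by positivity)]
          congr 1
          simp only [Real.sqrt_sq hs2'.le]; field_simp
        linear_combination h3 - h1
      exact le_csSup hbdd ⟨w, hwK, hwval.symm⟩
  constructor
  · constructor
    · apply max_le _ (by linarith)
      by_cases hcond : ξ * M ^ 2 / n ≤ s2
      · have := hwit hcond
        have h1 : M * ξ / n ≥ 0 := by positivity
        linarith
      · push_neg at hcond
        have : Real.sqrt (ξ * s2 / n) ≤ M * ξ / n := by
          rw [show M * ξ / n = Real.sqrt ((M * ξ / n)^2) from (Real.sqrt_sq (by positivity)).symm]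
          apply Real.sqrt_le_sqrt
          rw [div_pow]
          rw [div_le_div_iff₀ hN (by positivity)]
          have : ξ * s2 ≤ ξ * (ξ * M^2 / n) :=
            mul_le_mul_of_nonneg_left hcond.le hξ
          calc ξ * s2 * (n:ℝ)^2 ≤ ξ * (ξ * M^2 / n) * (n:ℝ)^2 := by
                apply mul_le_mul_of_nonneg_right this (by positivity)
            _ = (M * ξ)^2 * n := by field_simp
        linarith
    · exact hmub
  · intro hcond
    have := hwit hcond
    linarith
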